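/- Let (A, ρ) be a finite semimetric space of diameter at most 3r, and let B ⊆ A be a 2r-cluster (subset of diameter ≤ 2r) of maximal cardinality among all 2r-clusters in A. Then the number of unordered pairs {x,y} ⊆ A with r < ρ(x,y) ≤ 3r is at least (1/2)·max{|A|, 2|B|}·|A \ B|. -/

import Mathlib

open Finset
set_option linter.unusedSectionVars false

section Aux
variable {ι : Type*} [DecidableEq ι] (r : ℝ) (ρ : ι → ι → ℝ)

/-- A `2r`-cluster. -/
def IsClus (C : Finset ι) : Prop := ∀ x ∈ C, ∀ y ∈ C, ρ x y ≤ 2 * r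

noncomputable instance (C : Finset ι) : Decidable (IsClus r ρ C) := by
  unfold IsClus; infer_instance

/-- Maximum size of a 2r-cluster inside `A`. -/
noncomputable def mx (A : Finset ι) : ℕ :=
  ((A.powerset).filter (fun C => IsClus r ρ C)).sup Finset.card

/-- Number of ordered short pairs in `A`. -/
noncomputable def Sc (A : Finset ι) : ℕ := ∑ x ∈ A, (A.filter (fun y => ρ x y ≤ r)).card

lemma mx_le_of {A C : Finset ι} (hCA : C ⊆ A) (hC : IsClus r ρ C) :
    C.card ≤ mx r ρ A :=
  le_sup (by simp [mem_filter, mem_powerset, hCA, hC])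

lemma exists_mx (A : Finset ι) :
    ∃ M, M ⊆ A ∧ IsClus r ρ M ∧ M.card = mx r ρ A := by
  obtain ⟨M, hM, hMe⟩ := Finset.exists_mem_eq_sup
    ((A.powerset).filter (fun C => IsClus r ρ C))
    ⟨∅, by rw [mem_filter]; exact ⟨empty_mem_powerset _, by simp [IsClus]⟩⟩ Finset.card
  rw [mem_filter, mem_powerset] at hM
  exact ⟨M, hM.1, hM.2, hMe.symm⟩

lemma mx_le_card (A : Finset ι) : mx r ρ A ≤ A.card := by
  apply Finset.sup_le
  intro C hC
  rw [mem_filter, mem_powerset] at hC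
  exact card_le_card hC.1

variable (hsymm : ∀ x y, ρ x y = ρ y x) (htri : ∀ x y z, ρ x z ≤ ρ x y + ρ y z)

include hsymm htri in
lemma ball_card_le (A : Finset ι) (x : ι) :
    (A.filter (fun y => ρ x y ≤ r)).card ≤ mx r ρ A := by
  apply mx_le_of
  · exact filter_subset _ _
  · intro u hu v hv
    rw [mem_filter] at hu hv
    calc ρ u v ≤ ρ u x + ρ x v := htri u x v
    _ ≤ r + r := by
        have := hu.2; have := hv.2; rw [hsymm u x]; linarith
    _ = 2 * r := by ring


include hsymm in
lemma Sc_erase (hr : 0 < r) (hrefl : ∀ x, ρ x x = 0) {A : Finset ι} {x : ι}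
    (hx : x ∈ A) :
    Sc r ρ A + 1 = Sc r ρ (A.erase x) + 2 * (A.filter (fun y => ρ x y ≤ r)).card := by
  classical
  set A' := A.erase x with hA'
  have hxx : ρ x x ≤ r := by rw [hrefl]; linarith
  have hxA' : x ∉ A' := notMem_erase _ _
  -- ball of x in A
  have hbx : (A.filter (fun y => ρ x y ≤ r)).card
      = (A'.filter (fun y => ρ x y ≤ r)).card + 1 := by
    have : A = insert x A' := (insert_erase hx).symm
    rw [this, filter_insert, if_pos hxx, card_insert_of_notMem]
    intro h; exact hxA' (mem_of_mem_filter _ h)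
  -- rows over y ∈ A'
  have hrow : ∀ y, (A.filter (fun w => ρ y w ≤ r)).card
      = (A'.filter (fun w => ρ y w ≤ r)).card + (if ρ y x ≤ r then 1 else 0) := by
    intro y
    have : A = insert x A' := (insert_erase hx).symm
    rw [this, filter_insert]
    by_cases h : ρ y x ≤ r
    · rw [if_pos h, if_pos h, card_insert_of_notMem]
      intro hc; exact hxA' (mem_of_mem_filter _ hc)
    · rw [if_neg h, if_neg h, add_zero]
  have hsum : ∑ y ∈ A', (A.filter (fun w => ρ y w ≤ r)).card
      = Sc r ρ A' + (A'.filter (fun y => ρ y x ≤ r)).card := by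
    rw [Sc]
    rw [Finset.sum_congr rfl (fun y _ => hrow y), Finset.sum_add_distrib]
    congr 1
    rw [Finset.sum_boole]
    simp
  have hsymcol : (A'.filter (fun y => ρ y x ≤ r)) = (A'.filter (fun y => ρ x y ≤ r)) := by
    apply filter_congr; intro y _; rw [hsymm y x]
  have hsplit : Sc r ρ A = (A.filter (fun w => ρ x w ≤ r)).card
      + ∑ y ∈ A', (A.filter (fun w => ρ y w ≤ r)).card := by
    rw [Sc, ← Finset.add_sum_erase _ _ hx]
  rw [hsplit, hsum, hsymcol, hbx]
  ring


/-- Far-neighbourhood of `S` inside `A`. -/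
noncomputable def NF (A S : Finset ι) : Finset ι :=
  A.filter (fun y => ∃ s ∈ S, 2 * r < ρ s y)

lemma biUnion_NF (A W : Finset ι) (s : Finset {x // x ∈ W}) :
    s.biUnion (fun x => NF r ρ A {x.1}) = NF r ρ A (s.image Subtype.val) := by
  ext y
  simp only [mem_biUnion, NF, mem_filter, mem_image, mem_singleton]
  constructor
  · rintro ⟨x, hxs, hyA, s', hs', h⟩
    exact ⟨hyA, x.1, ⟨x, hxs, rfl⟩, hs' ▸ h⟩
  · rintro ⟨hyA, v, ⟨x, hxs, rfl⟩, h⟩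
    exact ⟨x, hxs, hyA, x.1, rfl, h⟩

lemma NF_mono (A : Finset ι) {S T : Finset ι} (h : S ⊆ T) :
    NF r ρ A S ⊆ NF r ρ A T := by
  intro y hy
  rw [NF, mem_filter] at hy ⊢
  obtain ⟨hyA, s, hs, hr⟩ := hy
  exact ⟨hyA, s, h hs, hr⟩

include hsymm in
lemma exists_core (A : Finset ι) (h2 : A.card < 2 * mx r ρ A) :
    ∃ x ∈ A, ∀ C ⊆ A, IsClus r ρ C → C.card = mx r ρ A → x ∈ C := by
  classical
  obtain ⟨M, hMA, hMc, hMm⟩ := exists_mx r ρ A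
  -- a Hall violator exists
  have hviol : ∃ S ∈ M.powerset, (NF r ρ A S).card < S.card := by
    by_contra hno
    push_neg at hno
    have hall : ∀ s : Finset {x // x ∈ M},
        s.card ≤ (s.biUnion (fun x => NF r ρ A {x.1})).card := by
      intro s
      rw [biUnion_NF]
      have h1 : (s.image Subtype.val).card = s.card :=
        Finset.card_image_of_injective _ Subtype.val_injective
      rw [← h1]
      apply hno
      rw [mem_powerset]
      intro v hv
      rw [mem_image] at hv
      obtain ⟨x, _, rfl⟩ := hv
      exact x.2
    obtain ⟨f, hfinj, hf⟩ :=
      (Finset.all_card_le_biUnion_card_iff_exists_injective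
        (fun x : {x // x ∈ M} => NF r ρ A {x.1})).mp hall
    -- image of f avoids M
    have hfA : ∀ x : {x // x ∈ M}, f x ∈ A \ M := by
      intro x
      have hx := hf x
      rw [NF, mem_filter] at hx
      obtain ⟨hA, s, hs, hfar⟩ := hx
      rw [mem_singleton] at hs
      subst hs
      rw [mem_sdiff]
      refine ⟨hA, fun hM => ?_⟩
      exact absurd (hMc _ x.2 _ hM) (by linarith)
    have hcard : M.card ≤ (A \ M).card := by
      have h0 : M.attach.card ≤ (A \ M).card :=
        Finset.card_le_card_of_injOn f (fun x _ => hfA x) (fun a _ b _ h => hfinj h)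
      simpa using h0
    have h1 : (A \ M).card = A.card - M.card := card_sdiff_of_subset hMA
    have h2' : M.card ≤ A.card := card_le_card hMA
    omega
  obtain ⟨S₀, hS₀⟩ := hviol
  -- minimal violator Z
  obtain ⟨Z, hZV, hZmin⟩ := Finset.exists_min_image
    ((M.powerset).filter (fun S => (NF r ρ A S).card < S.card)) Finset.card
    ⟨S₀, by rw [mem_filter]; exact ⟨hS₀.1, hS₀.2⟩⟩
  rw [mem_filter, mem_powerset] at hZV
  obtain ⟨hZM, hZviol⟩ := hZV
  have hZne : 0 < Z.card := lt_of_le_of_lt (Nat.zero_le _) hZviol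
  obtain ⟨z₀, hz₀⟩ := Finset.card_pos.mp hZne
  refine ⟨z₀, hMA (hZM hz₀), ?_⟩
  intro J hJA hJc hJm
  by_contra hzJ
  -- z₀ ∈ Z, z₀ ∉ J : derive contradiction
  set z := z₀
  -- Hall on Z.erase z
  have hallZ : ∀ s : Finset {x // x ∈ Z.erase z},
      s.card ≤ (s.biUnion (fun x => NF r ρ A {x.1})).card := by
    intro s
    rw [biUnion_NF]
    set S := s.image Subtype.val with hS
    have h1 : S.card = s.card := Finset.card_image_of_injective _ Subtype.val_injective
    have hSsub : S ⊆ Z.erase z := by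
      intro v hv
      rw [hS, mem_image] at hv
      obtain ⟨x, _, rfl⟩ := hv
      exact x.2
    rw [← h1]
    by_contra hbad
    push_neg at hbad
    have : Z.card ≤ S.card := by
      apply hZmin
      rw [mem_filter, mem_powerset]
      exact ⟨hSsub.trans ((erase_subset _ _).trans hZM), hbad⟩
    have : S.card ≤ (Z.erase z).card := card_le_card hSsub
    have := card_erase_of_mem hz₀
    omega
  obtain ⟨g, hginj, hg⟩ :=
    (Finset.all_card_le_biUnion_card_iff_exists_injective
      (fun x : {x // x ∈ Z.erase z} => NF r ρ A {x.1})).mp hallZ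
  have hgfar : ∀ x : {x // x ∈ Z.erase z}, 2 * r < ρ x.1 (g x) := by
    intro x
    have hx := hg x
    rw [NF, mem_filter] at hx
    obtain ⟨_, s, hs, hfar⟩ := hx
    rw [mem_singleton] at hs
    subst hs; exact hfar
  -- image of g equals NF Z
  set G := (Z.erase z).attach.image g with hG
  have hGsub : G ⊆ NF r ρ A Z := by
    intro y hy
    rw [hG, mem_image] at hy
    obtain ⟨x, _, rfl⟩ := hy
    refine NF_mono r ρ A ?_ (hg x)
    intro v hv
    rw [mem_singleton] at hv
    subst hv
    exact (erase_subset _ _) x.2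
  have hGcard : G.card = Z.card - 1 := by
    rw [hG, Finset.card_image_of_injective _ hginj, card_attach,
      card_erase_of_mem hz₀]
  have hNFle : (NF r ρ A Z).card ≤ Z.card - 1 := by omega
  have hGeq : G = NF r ρ A Z :=
    Finset.eq_of_subset_of_card_le hGsub (by omega)
  -- the swap set
  set R := Z ∪ NF r ρ A Z with hR
  have hdisj : Disjoint (J \ R) Z := by
    rw [Finset.disjoint_left]
    intro u hu huZ
    rw [mem_sdiff] at hu
    exact hu.2 (mem_union_left _ huZ)
  have hJ'c : IsClus r ρ ((J \ R) ∪ Z) := by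
    intro u hu v hv
    rw [mem_union] at hu hv
    rcases hu with hu | hu <;> rcases hv with hv | hv
    · exact hJc _ (sdiff_subset hu) _ (sdiff_subset hv)
    · -- u ∈ J \ R, v ∈ Z
      by_contra hcon
      push_neg at hcon
      rw [mem_sdiff] at hu
      have : u ∈ NF r ρ A Z := by
        rw [NF, mem_filter]
        exact ⟨hJA hu.1, v, hv, by rw [hsymm v u]; linarith⟩
      exact hu.2 (mem_union_right _ this)
    · -- u ∈ Z, v ∈ J \ R
      by_contra hcon
      push_neg at hcon
      rw [mem_sdiff] at hv
      have : v ∈ NF r ρ A Z := by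
        rw [NF, mem_filter]
        exact ⟨hJA hv.1, u, hu, by linarith⟩
      exact hv.2 (mem_union_right _ this)
    · exact hMc _ (hZM hu) _ (hZM hv)
  have hJ'A : (J \ R) ∪ Z ⊆ A := by
    intro u hu
    rw [mem_union] at hu
    rcases hu with hu | hu
    · exact hJA (sdiff_subset hu)
    · exact hMA (hZM hu)
  have hJ'le : ((J \ R) ∪ Z).card ≤ J.card := by
    rw [hJm]; exact mx_le_of r ρ hJ'A hJ'c
  have hJsplit : (J \ R).card + (J ∩ R).card = J.card := by
    rw [Finset.card_sdiff_add_card_inter]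
  rw [card_union_of_disjoint hdisj] at hJ'le
  have hlow : Z.card ≤ (J ∩ R).card := by omega
  -- upper bound on J ∩ R
  have hsub2 : J ∩ R ⊆ (Z.erase z).attach.biUnion (fun x => J ∩ {x.1, g x}) := by
    intro p hp
    rw [mem_inter] at hp
    obtain ⟨hpJ, hpR⟩ := hp
    rw [hR, mem_union] at hpR
    rcases hpR with hpZ | hpNF
    · have hpz : p ≠ z := fun h => hzJ (h ▸ hpJ)
      have hpe : p ∈ Z.erase z := mem_erase.mpr ⟨hpz, hpZ⟩
      rw [mem_biUnion]
      exact ⟨⟨p, hpe⟩, mem_attach _ _, mem_inter.mpr ⟨hpJ, by simp⟩⟩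
    · rw [← hGeq, hG, mem_image] at hpNF
      obtain ⟨x, _, rfl⟩ := hpNF
      rw [mem_biUnion]
      exact ⟨x, mem_attach _ _, mem_inter.mpr ⟨hpJ, by simp⟩⟩
  have hup : (J ∩ R).card ≤ Z.card - 1 := by
    calc (J ∩ R).card ≤ ((Z.erase z).attach.biUnion (fun x => J ∩ {x.1, g x})).card :=
          card_le_card hsub2
    _ ≤ ∑ x ∈ (Z.erase z).attach, (J ∩ {x.1, g x}).card := card_biUnion_le
    _ ≤ ∑ _x ∈ (Z.erase z).attach, 1 := by
        apply Finset.sum_le_sum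
        intro x _
        -- J cannot contain both x.1 and g x
        have hnotboth : ¬ (x.1 ∈ J ∧ g x ∈ J) := by
          rintro ⟨h1, h2⟩
          exact absurd (hJc _ h1 _ h2) (by have := hgfar x; linarith)
        by_cases hx1 : x.1 ∈ J
        · have : J ∩ {x.1, g x} ⊆ {x.1} := by
            intro w hw
            rw [mem_inter, mem_insert, mem_singleton] at hw
            rcases hw.2 with h | h
            · rw [h]; exact mem_singleton_self _
            · exact absurd ⟨hx1, h ▸ hw.1⟩ hnotboth
          simpa using card_le_card this
        · have : J ∩ {x.1, g x} ⊆ {g x} := by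
            intro w hw
            rw [mem_inter, mem_insert, mem_singleton] at hw
            rcases hw.2 with h | h
            · exact absurd (h ▸ hw.1) hx1
            · rw [h]; exact mem_singleton_self _
          simpa using card_le_card this
    _ = Z.card - 1 := by
        rw [Finset.sum_const, smul_eq_mul, mul_one, card_attach,
          card_erase_of_mem hz₀]
  omega


include hsymm htri in
lemma key (hr : 0 < r) (hrefl : ∀ x, ρ x x = 0) :
    ∀ n : ℕ, ∀ A : Finset ι, A.card = n → ∀ t, A.card = mx r ρ A + t →
      Sc r ρ A ≤ mx r ρ A * mx r ρ A + t * t := by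
  intro n
  induction n using Nat.strong_induction_on with
  | _ n ih =>
  intro A hn t ht
  by_cases hcase : 2 * mx r ρ A ≤ A.card
  · -- easy case : Sc ≤ n·m ≤ m² + t²
    have hrows : Sc r ρ A ≤ A.card * mx r ρ A := by
      rw [Sc]
      calc ∑ x ∈ A, (A.filter (fun y => ρ x y ≤ r)).card
          ≤ ∑ _x ∈ A, mx r ρ A :=
            Finset.sum_le_sum (fun x _ => ball_card_le r ρ hsymm htri A x)
      _ = A.card * mx r ρ A := by rw [Finset.sum_const, smul_eq_mul]
    have hmt : mx r ρ A ≤ t := by omega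
    have h2 : t * mx r ρ A ≤ t * t := Nat.mul_le_mul_left t hmt
    have h3 : A.card * mx r ρ A
        = mx r ρ A * mx r ρ A + t * mx r ρ A := by rw [ht]; ring
    linarith
  · push_neg at hcase
    obtain ⟨x, hxA, hcore⟩ := exists_core r ρ hsymm A hcase
    have hm1 : 1 ≤ mx r ρ A := by omega
    obtain ⟨k, hk⟩ : ∃ k, mx r ρ A = k + 1 := ⟨mx r ρ A - 1, by omega⟩
    set A' := A.erase x with hA'
    have hcard' : A'.card = A.card - 1 := card_erase_of_mem hxA
    have hup : mx r ρ A' ≤ k := by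
      apply Finset.sup_le
      intro C hC
      rw [mem_filter, mem_powerset] at hC
      have hCA : C ⊆ A := hC.1.trans (erase_subset _ _)
      have hle := mx_le_of r ρ hCA hC.2
      rcases eq_or_lt_of_le hle with heq | hlt
      · exact absurd (hcore C hCA hC.2 heq) (fun h => (notMem_erase x A) (hC.1 h))
      · omega
    have hlo : k ≤ mx r ρ A' := by
      obtain ⟨M, hMA, hMc, hMm⟩ := exists_mx r ρ A
      have hxM : x ∈ M := hcore M hMA hMc hMm
      have hsub : M.erase x ⊆ A' := fun u hu => by
        rw [mem_erase] at hu ⊢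
        exact ⟨hu.1, hMA hu.2⟩
      have hclus : IsClus r ρ (M.erase x) :=
        fun u hu v hv => hMc u (erase_subset _ _ hu) v (erase_subset _ _ hv)
      have := mx_le_of r ρ hsub hclus
      rw [card_erase_of_mem hxM, hMm] at this
      omega
    have hm' : mx r ρ A' = k := le_antisymm hup hlo
    have hAcard : 1 ≤ A.card := Finset.card_pos.mpr ⟨x, hxA⟩
    have hIH : Sc r ρ A' ≤ k * k + t * t := by
      have := ih (A.card - 1) (by omega) A' (by omega) t (by omega)
      rwa [hm'] at this
    have herase := Sc_erase r ρ hsymm hr hrefl hxA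
    have hball := ball_card_le r ρ hsymm htri A x
    have hexp : (k + 1) * (k + 1) = k * k + 2 * k + 1 := by ring
    rw [hk]
    rw [hk] at hball
    linarith

end Aux

/-- In a finite semimetric space of diameter ≤ 3r, if B is a maximum-size
2r-cluster, then the number of medium edges is at least
`(1/2) max(|A|, 2|B|) |A \ B|`. -/
theorem stmt_2 {ι : Type*} [DecidableEq ι] (r : ℝ) (hr : 0 < r)
    (ρ : ι → ι → ℝ)
    (hsymm : ∀ x y, ρ x y = ρ y x) (hrefl : ∀ x, ρ x x = 0)
    (htri : ∀ x y z, ρ x z ≤ ρ x y + ρ y z)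
    (A B : Finset ι) (hBA : B ⊆ A)
    (hdiamA : ∀ x ∈ A, ∀ y ∈ A, ρ x y ≤ 3 * r)
    (hdiamB : ∀ x ∈ B, ∀ y ∈ B, ρ x y ≤ 2 * r)
    (hmax : ∀ C : Finset ι, C ⊆ A → (∀ x ∈ C, ∀ y ∈ C, ρ x y ≤ 2 * r) →
      C.card ≤ B.card) :
    (1 / 2 : ℝ) * max (A.card : ℝ) (2 * B.card) * ((A \ B).card : ℝ)
      ≤ (1 / 2 : ℝ) * Set.ncard
        {p : ι × ι | p.1 ∈ A ∧ p.2 ∈ A ∧ r < ρ p.1 p.2 ∧ ρ p.1 p.2 ≤ 3 * r} := by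
  classical
  -- `B.card` is the maximum cluster size
  have hmx : mx r ρ A = B.card := by
    apply le_antisymm
    · apply Finset.sup_le
      intro C hC
      rw [Finset.mem_filter, Finset.mem_powerset] at hC
      exact hmax C hC.1 hC.2
    · exact mx_le_of r ρ hBA hdiamB
  set t := (A \ B).card with htdef
  have htn : A.card = B.card + t := by
    rw [htdef, ← Finset.card_sdiff_add_card_eq_card hBA]; ring
  -- medium count
  set Mc := ∑ x ∈ A, (A.filter (fun y => ¬ ρ x y ≤ r)).card with hMc
  have hsplit : Sc r ρ A + Mc = A.card * A.card := by
    rw [Sc, hMc, ← Finset.sum_add_distrib]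
    have : ∀ x ∈ A, (A.filter (fun y => ρ x y ≤ r)).card
        + (A.filter (fun y => ¬ ρ x y ≤ r)).card = A.card := by
      intro x _
      exact Finset.card_filter_add_card_filter_not _
    rw [Finset.sum_congr rfl this, Finset.sum_const, smul_eq_mul]
  -- identify the ncard with Mc
  set P := (A ×ˢ A).filter (fun p : ι × ι => ¬ ρ p.1 p.2 ≤ r) with hP
  have hsetP : {p : ι × ι | p.1 ∈ A ∧ p.2 ∈ A ∧ r < ρ p.1 p.2 ∧ ρ p.1 p.2 ≤ 3 * r}
      = (P : Set (ι × ι)) := by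
    ext p
    simp only [Set.mem_setOf_eq, Finset.coe_filter, Finset.mem_product, Set.mem_setOf_eq, hP]
    constructor
    · rintro ⟨h1, h2, h3, _⟩
      exact ⟨⟨h1, h2⟩, not_le.mpr h3⟩
    · rintro ⟨⟨h1, h2⟩, h3⟩
      exact ⟨h1, h2, not_le.mp h3, hdiamA _ h1 _ h2⟩
  have hPcard : P.card = Mc := by
    rw [hP, hMc]
    rw [Finset.card_eq_sum_card_fiberwise
      (f := Prod.fst) (t := A)
      (fun p hp => ((Finset.mem_product.mp (Finset.mem_of_mem_filter _ hp)).1))]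
    apply Finset.sum_congr rfl
    intro x hxA
    apply Finset.card_bij (fun p _ => p.2)
    · intro p hp
      simp only [Finset.mem_filter] at hp ⊢
      obtain ⟨⟨hprod, hmed⟩, hfst⟩ := hp
      rw [Finset.mem_product] at hprod
      refine ⟨hprod.2, ?_⟩
      rwa [hfst] at hmed
    · intro p hp q hq hpq
      simp only [Finset.mem_filter] at hp hq
      exact Prod.ext (hp.2.trans hq.2.symm) hpq
    · intro y hy
      simp only [Finset.mem_filter] at hy
      refine ⟨(x, y), ?_, rfl⟩
      simp only [Finset.mem_filter, Finset.mem_product]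
      exact ⟨⟨⟨hxA, hy.1⟩, hy.2⟩, by simp⟩
  have hncard : Set.ncard {p : ι × ι | p.1 ∈ A ∧ p.2 ∈ A ∧ r < ρ p.1 p.2
      ∧ ρ p.1 p.2 ≤ 3 * r} = Mc := by
    rw [hsetP, Set.ncard_coe_finset, hPcard]
  -- the natural-number inequality
  have hkey : Sc r ρ A ≤ B.card * B.card + t * t := by
    have := key r ρ hsymm htri hr hrefl A.card A rfl t (by omega)
    rwa [hmx] at this
  have hrows : Sc r ρ A ≤ A.card * B.card := by
    rw [Sc]
    calc ∑ x ∈ A, (A.filter (fun y => ρ x y ≤ r)).card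
        ≤ ∑ _x ∈ A, mx r ρ A :=
          Finset.sum_le_sum (fun x _ => ball_card_le r ρ hsymm htri A x)
    _ = A.card * B.card := by rw [Finset.sum_const, smul_eq_mul, hmx]
  have hN : max A.card (2 * B.card) * t ≤ Mc := by
    rcases le_total (2 * B.card) A.card with hc | hc
    · rw [max_eq_left hc]
      have hnn : A.card * A.card = A.card * B.card + A.card * t := by
        rw [htn]; ring
      linarith
    · rw [max_eq_right hc]
      have hnn : A.card * A.card
          = B.card * B.card + 2 * B.card * t + t * t := by
        rw [htn]; ring
      linarith
  -- cast to ℝ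
  rw [hncard]
  have hcast : ((max A.card (2 * B.card) : ℕ) : ℝ) * (t : ℝ) ≤ (Mc : ℝ) := by
    exact_mod_cast hN
  rw [Nat.cast_max] at hcast
  push_cast at hcast ⊢
  linarith
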